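/- Let ℓ be a prime number, let K = ℚ(ζ_ℓ) be the ℓ-th cyclotomic field, and let L be a finite field extension of K of prime degree p with p ≠ ℓ. Let q be a nonzero prime ideal of the ring of integers O_K of K not dividing ℓO_K, and suppose that the extended ideal qO_L is a prime ideal of O_L. If α ∈ O_K is such that there exists β ∈ O_L with β^ℓ ≡ α (mod qO_L), then there exists γ ∈ O_K with γ^ℓ ≡ α (mod q). -/

import Mathlib

open NumberField

open Finset in
lemma aux_pow_descend {F F' : Type*} [Field F] [Fintype F] [Field F'] [Fintype F']
    (φ : F →+* F') {ℓ f : ℕ} (hℓ : ℓ.Prime)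
    (hdvd : ℓ ∣ Fintype.card F - 1)
    (hcard : Fintype.card F' = Fintype.card F ^ f)
    (hlf : ¬ ℓ ∣ f)
    (a : F) (b : F') (hb : b ^ ℓ = φ a) : ∃ c : F, c ^ ℓ = a := by
  haveI : NeZero ℓ := ⟨hℓ.ne_zero⟩
  by_cases ha : a = 0
  · exact ⟨0, by rw [ha, zero_pow hℓ.ne_zero]⟩
  set x := Fintype.card F with hx
  have hx2 : 2 ≤ x := Fintype.one_lt_card
  have hx1 : 1 ≤ x := le_trans (by norm_num) hx2
  set n := x - 1 with hn
  have hnpos : 0 < n := by omega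
  obtain ⟨n', hn'⟩ := hdvd
  have hn'pos : 0 < n' := by
    rcases Nat.eq_zero_or_pos n' with h | h
    · rw [h, mul_zero] at hn'; omega
    · exact h
  set t := ∑ i ∈ range f, x ^ i with ht
  have hmt : x ^ f - 1 = n * t := by
    have hg : ((t : ℕ) : ℤ) * ((x : ℤ) - 1) = (x : ℤ) ^ f - 1 := by
      push_cast [ht]
      exact geom_sum_mul _ _
    have hx1f : 1 ≤ x ^ f := Nat.one_le_pow _ _ hx1
    have : ((x ^ f - 1 : ℕ) : ℤ) = ((n * t : ℕ) : ℤ) := by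
      rw [Nat.cast_sub hx1f, Nat.cast_mul, hn, Nat.cast_sub hx1]
      push_cast
      rw [mul_comm ((x:ℤ) - 1) _, hg]
    exact_mod_cast this
  -- ℓ does not divide t
  have hlt : ¬ ℓ ∣ t := by
    intro h
    apply hlf
    have hxz : (x : ZMod ℓ) = 1 := by
      have h0 : ((n : ℕ) : ZMod ℓ) = 0 :=
        (ZMod.natCast_eq_zero_iff n ℓ).mpr ⟨n', hn'⟩
      have hxn : x = n + 1 := by omega
      rw [hxn]; push_cast [h0]; ring
    have htf : ((t : ℕ) : ZMod ℓ) = (f : ZMod ℓ) := by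
      rw [ht]; push_cast; simp [hxz]
    have : ((f : ℕ) : ZMod ℓ) = 0 := by
      rw [← htf]; exact (ZMod.natCast_eq_zero_iff t ℓ).mpr h
    exact (ZMod.natCast_eq_zero_iff f ℓ).mp this
  -- b nonzero
  have hb0 : b ≠ 0 := by
    intro h
    apply ha
    apply φ.injective
    rw [map_zero, ← hb, h, zero_pow hℓ.ne_zero]
  -- a ^ (n' * t) = 1
  have h1 : a ^ (n' * t) = 1 := by
    apply φ.injective
    rw [map_pow, ← hb, ← pow_mul, map_one]
    have hm : ℓ * (n' * t) = Fintype.card F' - 1 := by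
      rw [hcard, hmt, hn', mul_assoc]
    rw [hm]
    exact FiniteField.pow_card_sub_one_eq_one b hb0
  -- pass to units
  set u : Fˣ := Units.mk0 a ha with hu
  have h2 : u ^ (n' * t) = 1 := by
    ext
    rw [Units.val_pow_eq_pow_val, hu, Units.val_mk0, h1, Units.val_one]
  have hcardu : Nat.card Fˣ = n := by
    rw [Nat.card_units, Nat.card_eq_fintype_card]
  have hd1 : orderOf u ∣ n := hcardu ▸ orderOf_dvd_natCard u
  have hd2 : orderOf u ∣ n' * t := orderOf_dvd_of_pow_eq_one h2
  have hgcd : Nat.gcd n (n' * t) = n' := by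
    have hco : Nat.gcd ℓ t = 1 := hℓ.coprime_iff_not_dvd.mpr hlt
    rw [hn', mul_comm ℓ n', Nat.gcd_mul_left, hco, mul_one]
  have hd : orderOf u ∣ n' := hgcd ▸ Nat.dvd_gcd hd1 hd2
  have h3 : u ^ n' = 1 := orderOf_dvd_iff_pow_eq_one.mp hd
  -- cyclic group argument
  obtain ⟨g, hg⟩ := IsCyclic.exists_monoid_generator (α := Fˣ)
  obtain ⟨i, hi0⟩ := hg u
  have hi : g ^ i = u := hi0
  have horder : orderOf g = n := by
    rw [orderOf_eq_card_of_forall_mem_zpowers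
      (fun y => mem_powers_iff_mem_zpowers.mp (hg y)), hcardu]
  have hni : n ∣ i * n' := by
    have hgi : g ^ (i * n') = 1 := by rw [pow_mul, hi, h3]
    have := orderOf_dvd_of_pow_eq_one hgi
    rwa [horder] at this
  have hli : ℓ ∣ i := by
    have h4 : ℓ * n' ∣ i * n' := hn' ▸ hni
    have := (Nat.mul_dvd_mul_iff_right hn'pos).mp h4
    exact this
  obtain ⟨j, hj⟩ := hli
  refine ⟨((g ^ j : Fˣ) : F), ?_⟩
  have hgj : (g ^ j) ^ ℓ = u := by
    rw [← pow_mul, mul_comm j ℓ, ← hj, hi]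
  rw [← Units.val_pow_eq_pow_val, hgj, hu, Units.val_mk0]

set_option synthInstance.maxHeartbeats 1000000 in
set_option maxHeartbeats 2000000 in
/-- Let `ℓ` be a prime, `K = ℚ(ζ_ℓ)` the `ℓ`-th cyclotomic field, and `L` a
finite extension of `K` of prime degree `p ≠ ℓ`.  Let `q` be a nonzero prime ideal of `𝓞 K`
not dividing `ℓ 𝓞 K` such that `q 𝓞 L` is prime.  If `α ∈ 𝓞 K` is congruent to an `ℓ`-th
power modulo `q 𝓞 L`, then it is congruent to an `ℓ`-th power modulo `q`. -/
theorem stmt_0 (ℓ : ℕ+) (hℓ : (ℓ : ℕ).Prime)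
    (K : Type*) [Field K] [Algebra ℚ K] [IsCyclotomicExtension {(ℓ : ℕ)} ℚ K] [NumberField K]
    (L : Type*) [Field L] [NumberField L] [Algebra K L] [FiniteDimensional K L]
    (p : ℕ) (hp : p.Prime) (hpℓ : p ≠ (ℓ : ℕ)) (hdeg : Module.finrank K L = p)
    (q : Ideal (𝓞 K)) (hqprime : q.IsPrime) (hq0 : q ≠ ⊥)
    (hqℓ : ¬ q ∣ Ideal.span {((ℓ : ℕ) : 𝓞 K)})
    (hqL : (q.map (algebraMap (𝓞 K) (𝓞 L))).IsPrime)
    (α : 𝓞 K)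
    (hβ : ∃ β : 𝓞 L, β ^ (ℓ : ℕ) - algebraMap (𝓞 K) (𝓞 L) α ∈ q.map (algebraMap (𝓞 K) (𝓞 L))) :
    ∃ γ : 𝓞 K, γ ^ (ℓ : ℕ) - α ∈ q := by
  classical
  obtain ⟨β, hb⟩ := hβ
  set f0 := algebraMap (𝓞 K) (𝓞 L) with hf0
  have hinj : Function.Injective f0 :=
    algebraMap_injective_of_field_isFractionRing (𝓞 K) (𝓞 L) K L
  have hqmax : q.IsMaximal := hqprime.isMaximal hq0
  haveI := hqmax
  have hQ0 : q.map f0 ≠ ⊥ := by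
    rw [Ne, Ideal.map_eq_bot_iff_le_ker, (RingHom.injective_iff_ker_eq_bot f0).mp hinj,
      le_bot_iff]
    exact hq0
  have hQmax : (q.map f0).IsMaximal := hqL.isMaximal hQ0
  haveI := hQmax
  letI : Field (𝓞 K ⧸ q) := Ideal.Quotient.field q
  letI : Field (𝓞 L ⧸ q.map f0) := Ideal.Quotient.field _
  haveI : Fintype (𝓞 K ⧸ q) := @Fintype.ofFinite _ (Ideal.finiteQuotientOfFreeOfNeBot q hq0)
  haveI : Fintype (𝓞 L ⧸ q.map f0) := @Fintype.ofFinite _ (Ideal.finiteQuotientOfFreeOfNeBot _ hQ0)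
  haveI : (q.map f0).LiesOver q := ⟨by
    refine (hqmax.eq_of_le (fun h => hqL.ne_top ?_) Ideal.le_comap_map)
    rw [Ideal.eq_top_iff_one]
    have h1 : (1 : 𝓞 K) ∈ Ideal.under (𝓞 K) (q.map f0) := h ▸ Submodule.mem_top
    simpa using h1⟩
  -- the inertia degree divides p
  haveI : Module.Finite (𝓞 K) (𝓞 L) := Module.IsNoetherian.finite (𝓞 K) (𝓞 L)
  have hQprimeElt : Prime (q.map f0) := (Ideal.prime_iff_isPrime hQ0).mpr hqL
  have hfactors : (UniqueFactorizationMonoid.factors (q.map f0)).toFinset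
      = {q.map f0} := by
    rw [UniqueFactorizationMonoid.factors_eq_normalizedFactors,
      UniqueFactorizationMonoid.normalizedFactors_irreducible hQprimeElt.irreducible,
      normalize_eq, Multiset.toFinset_singleton]
  have hsum := Ideal.sum_ramification_inertia (R := 𝓞 K) (S := 𝓞 L) K L hq0
  unfold IsDedekindDomain.primesOverFinset at hsum
  rw [hfactors, Finset.sum_singleton, hdeg] at hsum
  have hfdvd : Ideal.inertiaDeg' q (q.map f0) ∣ p := Dvd.intro_left _ hsum
  have hfin : Ideal.inertiaDeg' q (q.map f0)
      = Module.finrank (𝓞 K ⧸ q) (𝓞 L ⧸ q.map f0) := Ideal.inertiaDeg'_algebraMap q (q.map f0)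
  have hlf : ¬ (ℓ : ℕ) ∣ Module.finrank (𝓞 K ⧸ q) (𝓞 L ⧸ q.map f0) := by
    intro h
    rw [← hfin] at h
    have hlp : (ℓ : ℕ) ∣ p := h.trans hfdvd
    rcases (Nat.Prime.eq_one_or_self_of_dvd hp _ hlp) with h1 | h1
    · exact hℓ.one_lt.ne' h1
    · exact hpℓ h1.symm
  -- cardinality of the big residue field
  have hcard : Fintype.card (𝓞 L ⧸ q.map f0)
      = Fintype.card (𝓞 K ⧸ q) ^ Module.finrank (𝓞 K ⧸ q) (𝓞 L ⧸ q.map f0) :=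
    Module.card_eq_pow_finrank
  -- ℓ divides card (𝓞 K ⧸ q) - 1
  have hdvd : (ℓ : ℕ) ∣ Fintype.card (𝓞 K ⧸ q) - 1 := by
    obtain ⟨ζ, hζ⟩ := IsCyclotomicExtension.exists_isPrimitiveRoot ℚ K (Set.mem_singleton (ℓ : ℕ)) hℓ.ne_zero
    have hz0 : IsPrimitiveRoot hζ.toInteger (ℓ : ℕ) := hζ.toInteger_isPrimitiveRoot
    set z0 := hζ.toInteger with hz0def
    set z := Ideal.Quotient.mk q z0 with hzdef
    have hzpow : z ^ (ℓ : ℕ) = 1 := by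
      rw [hzdef, ← map_pow, hz0.pow_eq_one, map_one]
    have hz1 : z ≠ 1 := by
      intro h
      apply hqℓ
      rw [Ideal.dvd_span_singleton]
      have hz0ne : z0 - 1 ≠ 0 := sub_ne_zero.mpr (hz0.ne_one hℓ.one_lt)
      have hgeo : (∑ i ∈ Finset.range (ℓ : ℕ), z0 ^ i) * (z0 - 1) = 0 := by
        rw [geom_sum_mul, hz0.pow_eq_one, sub_self]
      have hsum0 : ∑ i ∈ Finset.range (ℓ : ℕ), z0 ^ i = 0 :=
        (mul_eq_zero.mp hgeo).resolve_right hz0ne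
      have h2 := congrArg (Ideal.Quotient.mk q) hsum0
      rw [map_sum, map_zero] at h2
      simp only [map_pow, ← hzdef, h, one_pow] at h2
      rw [Finset.sum_const, Finset.card_range, nsmul_eq_mul, mul_one] at h2
      rw [← Ideal.Quotient.eq_zero_iff_mem, map_natCast]
      exact h2
    have hz0' : z ≠ 0 := by
      intro h
      rw [h, zero_pow hℓ.ne_zero] at hzpow
      exact zero_ne_one hzpow
    have hord : orderOf z = (ℓ : ℕ) := by
      rcases Nat.Prime.eq_one_or_self_of_dvd hℓ _ (orderOf_dvd_of_pow_eq_one hzpow) with h | h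
      · exact absurd (orderOf_eq_one_iff.mp h) hz1
      · exact h
    set w : (𝓞 K ⧸ q)ˣ := Units.mk0 z hz0' with hw
    have hordw : orderOf w = (ℓ : ℕ) := by
      rw [← orderOf_units, hw, Units.val_mk0, hord]
    have hdc := orderOf_dvd_natCard w
    rwa [hordw, Nat.card_units, Nat.card_eq_fintype_card] at hdc
  -- apply the auxiliary lemma
  set φ := algebraMap (𝓞 K ⧸ q) (𝓞 L ⧸ q.map f0) with hφ
  have hbq : (Ideal.Quotient.mk (q.map f0) β) ^ (ℓ : ℕ) = φ (Ideal.Quotient.mk q α) := by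
    rw [hφ, Ideal.Quotient.algebraMap_quotient_map_quotient, ← map_pow]
    exact (Ideal.Quotient.mk_eq_mk_iff_sub_mem _ _).mpr hb
  obtain ⟨c, hc⟩ := aux_pow_descend φ hℓ hdvd hcard hlf _ _ hbq
  obtain ⟨γ, rfl⟩ := Ideal.Quotient.mk_surjective c
  refine ⟨γ, ?_⟩
  rw [← Ideal.Quotient.eq_zero_iff_mem, map_sub, map_pow, hc, sub_self]
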